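/- For every integer g ≥ 1 there exist infinitely many primes p with p ≡ 1 (mod 12) such that for every integer k with 1 ≤ k ≤ g, both p + k and p − k are divisible by some prime congruent to 5 modulo 6. -/

import Mathlib

/-- There are primes `≡ 5 (mod 6)` above any bound. -/
lemma exists_prime_five_mod_six_gt (N : ℕ) : ∃ q : ℕ, q.Prime ∧ q % 6 = 5 ∧ N < q := by
  have hu : IsUnit ((5 : ℕ) : ZMod 6) := by decide
  obtain ⟨p, hpN, hp, hmod⟩ := Nat.forall_exists_prime_gt_and_eq_mod hu N
  refine ⟨p, hp, ?_, hpN⟩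
  have := (ZMod.natCast_eq_natCast_iff' p 5 6).mp hmod
  omega

/-- The CRT construction: a modulus `M` and residue `a` forcing the divisibility pattern. -/
lemma key_crt (g : ℕ) : ∃ M a : ℕ, 0 < M ∧ 12 ∣ M ∧ a % 12 = 1 ∧ Nat.Coprime a M ∧
    ∀ k : ℕ, 1 ≤ k → k ≤ g →
      (∃ q : ℕ, q.Prime ∧ q % 6 = 5 ∧ q ∣ M ∧ (q : ℤ) ∣ (a : ℤ) + (k : ℤ)) ∧
      (∃ q : ℕ, q.Prime ∧ q % 6 = 5 ∧ q ∣ M ∧ (q : ℤ) ∣ (a : ℤ) - (k : ℤ)) := by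
  induction g with
  | zero =>
      exact ⟨12, 1, by norm_num, dvd_rfl, by norm_num, Nat.coprime_one_left _,
        fun k hk1 hk0 => by omega⟩
  | succ g ih =>
      obtain ⟨M, a, hMpos, h12M, ha12, haM, hdiv⟩ := ih
      set K : ℕ := g + 1 with hK
      obtain ⟨q, hq, hq5, hqgt⟩ := exists_prime_five_mod_six_gt (M + K)
      obtain ⟨q', hq', hq'5, hq'gt⟩ := exists_prime_five_mod_six_gt q
      have hq'gtMK : M + K < q' := lt_trans hqgt hq'gt
      have hqM : Nat.Coprime q M := (Nat.Prime.coprime_iff_not_dvd hq).mpr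
        (fun h => absurd (Nat.le_of_dvd hMpos h) (by omega))
      have hq'M : Nat.Coprime q' M := (Nat.Prime.coprime_iff_not_dvd hq').mpr
        (fun h => absurd (Nat.le_of_dvd hMpos h) (by omega))
      have hqq' : Nat.Coprime q q' := (Nat.coprime_primes hq hq').mpr (by omega)
      -- first CRT step
      set c : ℕ := (Nat.chineseRemainder hqM.symm a (q - K) : ℕ) with hc
      have hcprop := (Nat.chineseRemainder hqM.symm a (q - K)).2
      have hca : c ≡ a [MOD M] := hcprop.1
      have hcq : c ≡ q - K [MOD q] := hcprop.2
      -- second CRT step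
      have co2 : (M * q).Coprime q' := Nat.Coprime.mul hq'M.symm hqq'
      set b : ℕ := (Nat.chineseRemainder co2 c K : ℕ) with hb
      have hbprop := (Nat.chineseRemainder co2 c K).2
      have hbc : b ≡ c [MOD M * q] := hbprop.1
      have hbq' : b ≡ K [MOD q'] := hbprop.2
      have hbM : b ≡ a [MOD M] :=
        (Nat.ModEq.of_dvd (Dvd.intro q rfl) hbc).trans hca
      have hbq : b ≡ q - K [MOD q] :=
        (Nat.ModEq.of_dvd (Dvd.intro_left M rfl) hbc).trans hcq
      refine ⟨M * q * q', b, Nat.mul_pos (Nat.mul_pos hMpos hq.pos) hq'.pos,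
        h12M.mul_right _ |>.mul_right _, ?_, ?_, ?_⟩
      · -- b % 12 = 1
        have : b ≡ a [MOD 12] := Nat.ModEq.of_dvd h12M hbM
        unfold Nat.ModEq at this
        omega
      · -- coprimality
        have h1 : Nat.Coprime b M := by
          have hbM' : b % M = a % M := hbM
          have hg1 : Nat.gcd M b = Nat.gcd M a := by
            rw [Nat.gcd_rec M b, hbM', ← Nat.gcd_rec M a]
          exact Nat.coprime_comm.mp (by rw [Nat.Coprime, hg1]; exact haM.symm)
        have h2 : Nat.Coprime b q := by
          rw [Nat.coprime_comm, Nat.Prime.coprime_iff_not_dvd hq]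
          intro h
          have h0 : b % q = 0 := Nat.mod_eq_zero_of_dvd h
          have h4 : b % q = (q - K) % q := hbq
          have h5 : (q - K) % q = q - K := Nat.mod_eq_of_lt (by omega)
          omega
        have h3 : Nat.Coprime b q' := by
          rw [Nat.coprime_comm, Nat.Prime.coprime_iff_not_dvd hq']
          intro h
          have h0 : b % q' = 0 := Nat.mod_eq_zero_of_dvd h
          have h4 : b % q' = K % q' := hbq'
          have h5 : K % q' = K := Nat.mod_eq_of_lt (by omega)
          omega
        exact (h1.mul_right h2).mul_right h3
      · intro k hk1 hkg
        rcases Nat.lt_or_ge k K with hlt | hge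
        · -- old witnesses
          obtain ⟨⟨r, hr, hr5, hrM, hrdvd⟩, ⟨s, hs, hs5, hsM, hsdvd⟩⟩ :=
            hdiv k hk1 (by omega)
          have hdM : (M : ℤ) ∣ (a : ℤ) - (b : ℤ) := hbM.dvd
          have hrdM : (r : ℤ) ∣ (a : ℤ) - (b : ℤ) :=
            dvd_trans (Int.natCast_dvd_natCast.mpr hrM) hdM
          have hsdM : (s : ℤ) ∣ (a : ℤ) - (b : ℤ) :=
            dvd_trans (Int.natCast_dvd_natCast.mpr hsM) hdM
          constructor
          · exact ⟨r, hr, hr5, hrM.mul_right _ |>.mul_right _, by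
              have := dvd_sub hrdvd hrdM
              convert this using 1; rfl; ring⟩
          · exact ⟨s, hs, hs5, hsM.mul_right _ |>.mul_right _, by
              have := dvd_sub hsdvd hsdM
              convert this using 1; rfl; ring⟩
        · -- k = K : new primes
          have hkK : k = K := by omega
          subst hkK
          constructor
          · refine ⟨q, hq, hq5, Dvd.intro_left _ rfl |>.mul_right _, ?_⟩
            have hd : (q : ℤ) ∣ ((q - K : ℕ) : ℤ) - (b : ℤ) := hbq.dvd
            have hcast : ((q - K : ℕ) : ℤ) = (q : ℤ) - (K : ℤ) := by
              have : K ≤ q := by omega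
              push_cast [this]; ring
            rw [hcast] at hd
            have := dvd_sub (dvd_refl (q : ℤ)) hd
            convert this using 1; rfl; ring
          · refine ⟨q', hq', hq'5, Dvd.intro_left _ rfl, ?_⟩
            have hd : (q' : ℤ) ∣ ((K : ℕ) : ℤ) - (b : ℤ) := hbq'.dvd
            have := dvd_neg.mpr hd
            convert this using 1; rfl; ring

/-- For every integer `g ≥ 1` there are infinitely many primes `p ≡ 1 (mod 12)` such that
for every `1 ≤ k ≤ g`, both `p + k` and `p − k` are divisible by some prime congruent to
`5` modulo `6`. -/
theorem stmt_16 (g : ℕ) (hg : 1 ≤ g) :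
    {p : ℕ | p.Prime ∧ p % 12 = 1 ∧
      ∀ k : ℕ, 1 ≤ k → k ≤ g →
        (∃ q : ℕ, q.Prime ∧ q % 6 = 5 ∧ (q : ℤ) ∣ (p : ℤ) + (k : ℤ)) ∧
        (∃ q : ℕ, q.Prime ∧ q % 6 = 5 ∧ (q : ℤ) ∣ (p : ℤ) - (k : ℤ))}.Infinite := by
  obtain ⟨M, a, hMpos, h12M, ha12, haM, hdiv⟩ := key_crt g
  haveI : NeZero M := ⟨hMpos.ne'⟩
  have hu : IsUnit ((a : ℕ) : ZMod M) := (ZMod.isUnit_iff_coprime a M).mpr haM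
  refine (Nat.infinite_setOfPred_prime_and_eq_mod hu).mono ?_
  rintro p ⟨hp, hpa⟩
  have hpmod : p ≡ a [MOD M] := (ZMod.natCast_eq_natCast_iff p a M).mp hpa
  have hdMa : (M : ℤ) ∣ (a : ℤ) - (p : ℤ) := hpmod.dvd
  refine ⟨hp, ?_, ?_⟩
  · have h12 : p ≡ a [MOD 12] := Nat.ModEq.of_dvd h12M hpmod
    unfold Nat.ModEq at h12
    omega
  · intro k hk1 hkg
    obtain ⟨⟨r, hr, hr5, hrM, hrdvd⟩, ⟨s, hs, hs5, hsM, hsdvd⟩⟩ := hdiv k hk1 hkg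
    constructor
    · refine ⟨r, hr, hr5, ?_⟩
      have hrd : (r : ℤ) ∣ (a : ℤ) - (p : ℤ) :=
        dvd_trans (Int.natCast_dvd_natCast.mpr hrM) hdMa
      have := dvd_sub hrdvd hrd
      convert this using 1; rfl; ring
    · refine ⟨s, hs, hs5, ?_⟩
      have hsd : (s : ℤ) ∣ (a : ℤ) - (p : ℤ) :=
        dvd_trans (Int.natCast_dvd_natCast.mpr hsM) hdMa
      have := dvd_sub hsdvd hsd
      convert this using 1; rfl; ring
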